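/- For N ≥ 1, t > 0 and x ∈ ℝ^N, define u(x,t) := (4πt)^{−N/2} ∫_{B(0,1)} e^{−|x−y|²/(4t)} dy, where B(0,1) is the open unit ball of ℝ^N. Then for every L > 0, lim_{t→∞} sup_{|x| ≤ L√t} | (4πt)^{N/2}·|B(0,1)|^{−1}·u(x,t) − e^{−|x|²/(4t)} | = 0, where |B(0,1)| denotes the Lebesgue measure of B(0,1). -/

import Mathlib

open Set Filter MeasureTheory

private lemma abs_exp_sub_exp_le' {a b : ℝ} (ha : 0 ≤ a) (hab : a ≤ b) :
    |Real.exp (-a) - Real.exp (-b)| ≤ b - a := by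
  have h1 : Real.exp (-a) ≤ 1 := Real.exp_le_one_iff.mpr (by linarith)
  have h2 : (a - b) + 1 ≤ Real.exp (a - b) := Real.add_one_le_exp _
  have h3 : Real.exp (-a) * Real.exp (a - b) = Real.exp (-b) := by
    rw [← Real.exp_add]; ring_nf
  have h4 : Real.exp (a - b) ≤ 1 := Real.exp_le_one_iff.mpr (by linarith)
  have h5 : 0 < Real.exp (-a) := Real.exp_pos _
  have h6 : 0 < Real.exp (a - b) := Real.exp_pos _
  rw [abs_of_nonneg (by nlinarith)]
  nlinarith

private lemma abs_exp_sub_exp_le {a b : ℝ} (ha : 0 ≤ a) (hb : 0 ≤ b) :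
    |Real.exp (-a) - Real.exp (-b)| ≤ |a - b| := by
  rcases le_total a b with h | h
  · exact (abs_exp_sub_exp_le' ha h).trans (by rw [abs_sub_comm]; exact le_abs_self _)
  · rw [abs_sub_comm]
    exact (abs_exp_sub_exp_le' hb h).trans (le_abs_self _)

theorem stmt_16 (N : ℕ) (hN : 1 ≤ N) (L : ℝ) (hL : 0 < L) :
    Tendsto (fun t : ℝ =>
      sSup ((fun x : EuclideanSpace ℝ (Fin N) =>
        |(4 * Real.pi * t) ^ ((N : ℝ) / 2) *
            ((volume (Metric.ball (0 : EuclideanSpace ℝ (Fin N)) 1)).toReal)⁻¹ *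
            ((4 * Real.pi * t) ^ (-(N : ℝ) / 2) *
              ∫ y in Metric.ball (0 : EuclideanSpace ℝ (Fin N)) 1,
                Real.exp (-‖x - y‖ ^ 2 / (4 * t))) -
          Real.exp (-‖x‖ ^ 2 / (4 * t))|) ''
        {x : EuclideanSpace ℝ (Fin N) | ‖x‖ ≤ L * Real.sqrt t}))
      atTop (nhds 0) := by
  set E := EuclideanSpace ℝ (Fin N)
  set ball := Metric.ball (0 : E) 1 with hball
  set v : ℝ := (volume ball).toReal with hvdef
  have hvfin : volume ball < ⊤ := measure_ball_lt_top
  have hv : 0 < v :=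
    ENNReal.toReal_pos (Metric.measure_ball_pos volume 0 one_pos).ne' hvfin.ne
  -- the upper bound function tends to 0
  have hsqrt : Tendsto Real.sqrt atTop atTop := by
    apply tendsto_atTop_atTop.mpr
    intro b
    exact ⟨(max b 0) ^ 2, fun a ha => le_trans (le_max_left b 0)
      (by rw [← Real.sqrt_sq (le_max_right b 0)]; exact Real.sqrt_le_sqrt ha)⟩
  have hB : Tendsto (fun t : ℝ => (2 * L + 1) / (4 * Real.sqrt t)) atTop (nhds 0) :=
    tendsto_const_nhds.div_atTop (hsqrt.const_mul_atTop (by norm_num))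
  apply tendsto_of_tendsto_of_tendsto_of_le_of_le' (tendsto_const_nhds (x := (0:ℝ))) hB
  · filter_upwards with t
    apply Real.sSup_nonneg
    rintro z ⟨x, -, rfl⟩
    positivity
  · filter_upwards [eventually_ge_atTop (1 : ℝ)] with t ht
    have ht0 : (0:ℝ) < t := by linarith
    have hst : Real.sqrt t * Real.sqrt t = t := Real.mul_self_sqrt ht0.le
    have hst1 : 1 ≤ Real.sqrt t := Real.one_le_sqrt.mpr ht
    apply Real.sSup_le
    · rintro z ⟨x, hx, rfl⟩
      simp only [mem_setOf_eq] at hx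
      have h4t : (0:ℝ) < 4 * Real.pi * t := by positivity
      -- cancel the powers
      have hpow : (4 * Real.pi * t) ^ ((N : ℝ) / 2) * (4 * Real.pi * t) ^ (-(N : ℝ) / 2) = 1 := by
        rw [← Real.rpow_add h4t, show (N:ℝ)/2 + -(N:ℝ)/2 = 0 by ring, Real.rpow_zero]
      set f : E → ℝ := fun y => Real.exp (-‖x - y‖ ^ 2 / (4 * t)) with hf
      set Ex : ℝ := Real.exp (-‖x‖ ^ 2 / (4 * t)) with hEx
      set C : ℝ := (2 * L * Real.sqrt t + 1) / (4 * t) with hC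
      have hcont : Continuous f := by fun_prop
      have hfi : IntegrableOn f ball := by
        apply Measure.integrableOn_of_bounded hvfin.ne hcont.aestronglyMeasurable (M := 1)
        filter_upwards with y
        rw [Real.norm_eq_abs, abs_of_pos (Real.exp_pos _)]
        apply Real.exp_le_one_iff.mpr
        have : (0:ℝ) ≤ ‖x - y‖ ^ 2 / (4 * t) := by positivity
        rw [neg_div]
        linarith
      have hEi : IntegrableOn (fun _ : E => Ex) ball :=
        integrableOn_const hvfin.ne
      have hbound : ∀ y ∈ ball, ‖f y - Ex‖ ≤ C := by
        intro y hy
        have hy1 : ‖y‖ < 1 := by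
          simpa [hball, mem_ball_zero_iff] using hy
        have hy0 : 0 ≤ ‖y‖ := norm_nonneg y
        have ha : (0:ℝ) ≤ ‖x - y‖ ^ 2 / (4 * t) := by positivity
        have hb : (0:ℝ) ≤ ‖x‖ ^ 2 / (4 * t) := by positivity
        have key : ‖f y - Ex‖ ≤ |‖x - y‖ ^ 2 / (4 * t) - ‖x‖ ^ 2 / (4 * t)| := by
          rw [Real.norm_eq_abs, hf, hEx]
          simpa [neg_div] using abs_exp_sub_exp_le ha hb
        have htri : ‖x - y‖ ≤ ‖x‖ + ‖y‖ := norm_sub_le x y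
        have htri2 : |‖x‖ - ‖y‖| ≤ ‖x - y‖ := abs_norm_sub_norm_le x y
        have hsq : |‖x - y‖ ^ 2 - ‖x‖ ^ 2| ≤ 2 * ‖x‖ + 1 := by
          rw [abs_le]
          constructor
          · nlinarith [norm_nonneg (x - y), norm_nonneg x, abs_le.mp htri2]
          · nlinarith [norm_nonneg (x - y), norm_nonneg x]
        refine key.trans ?_
        rw [div_sub_div_same, abs_div, abs_of_pos (by positivity : (0:ℝ) < 4 * t), hC]
        gcongr
        nlinarith
      have hInt : ‖∫ y in ball, (f y - Ex)‖ ≤ C * v :=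
        norm_setIntegral_le_of_norm_le_const hvfin hbound
      have hsplit : ∫ y in ball, (f y - Ex) = (∫ y in ball, f y) - v * Ex := by
        rw [integral_sub hfi hEi, setIntegral_const, smul_eq_mul]; rfl
      have hz : |(4 * Real.pi * t) ^ ((N : ℝ) / 2) * v⁻¹ *
          ((4 * Real.pi * t) ^ (-(N : ℝ) / 2) * ∫ y in ball, f y) - Ex|
          = v⁻¹ * |(∫ y in ball, f y) - v * Ex| := by
        have : (4 * Real.pi * t) ^ ((N : ℝ) / 2) * v⁻¹ *
            ((4 * Real.pi * t) ^ (-(N : ℝ) / 2) * ∫ y in ball, f y) - Ex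
            = v⁻¹ * ((∫ y in ball, f y) - v * Ex) := by
          rw [show (4 * Real.pi * t) ^ ((N : ℝ) / 2) * v⁻¹ *
              ((4 * Real.pi * t) ^ (-(N : ℝ) / 2) * ∫ y in ball, f y)
              = ((4 * Real.pi * t) ^ ((N : ℝ) / 2) * (4 * Real.pi * t) ^ (-(N : ℝ) / 2)) *
                (v⁻¹ * ∫ y in ball, f y) from by ring, hpow, one_mul,
            mul_sub, ← mul_assoc, inv_mul_cancel₀ hv.ne', one_mul]
        rw [this, abs_mul, abs_of_pos (inv_pos.mpr hv)]
      calc |(4 * Real.pi * t) ^ ((N : ℝ) / 2) * v⁻¹ *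
          ((4 * Real.pi * t) ^ (-(N : ℝ) / 2) * ∫ y in ball, f y) - Ex|
          = v⁻¹ * |(∫ y in ball, f y) - v * Ex| := hz
        _ ≤ v⁻¹ * (C * v) := by
            apply mul_le_mul_of_nonneg_left _ (inv_pos.mpr hv).le
            rw [← hsplit]
            simpa using hInt
        _ = C := by field_simp
        _ ≤ (2 * L + 1) / (4 * Real.sqrt t) := by
            rw [hC, div_le_div_iff₀ (by positivity) (by positivity)]
            nlinarith
    · positivity
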